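/- Diagonal optimality at large penalty: if ρ ≥ ρ_max where the off-diagonal entries satisfy |Σ_{ij}| ≤ ρ for all i ≠ j while Σ_{ii} > 0, then the diagonal matrix X* with X*_{ii} = 1/(Σ_{ii} + ρ) is the optimal solution of the primal problem maximize log det X − Tr(ΣX) − ρ‖X‖₁ over positive definite X, with corresponding dual solution U* = X*⁻¹ diagonal with U*_{ii} = Σ_{ii} + ρ. -/

import Mathlib

open Matrix Finset

lemma my_trace_eq_sum_eig {n : ℕ} {M : Matrix (Fin n) (Fin n) ℝ} (hH : M.IsHermitian) :
    M.trace = ∑ i, hH.eigenvalues i := by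
  conv_lhs => rw [hH.spectral_theorem, Unitary.conjStarAlgAut_apply]
  rw [Matrix.trace_mul_comm, ← Matrix.mul_assoc,
    (Matrix.mem_unitaryGroup_iff'.mp (hH.eigenvectorUnitary).2), Matrix.one_mul,
    Matrix.trace_diagonal]
  simp

lemma my_log_det_le {n : ℕ} {M : Matrix (Fin n) (Fin n) ℝ} (hM : M.PosDef) :
    Real.log M.det ≤ M.trace - n := by
  have hH := hM.isHermitian
  have hpos := hM.eigenvalues_pos
  rw [my_trace_eq_sum_eig hH]
  have hdet : M.det = ∏ i, hH.eigenvalues i := by simpa using hH.det_eq_prod_eigenvalues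
  rw [hdet, Real.log_prod (fun i _ => (hpos i).ne')]
  calc ∑ i, Real.log (hH.eigenvalues i) ≤ ∑ i, (hH.eigenvalues i - 1) :=
        Finset.sum_le_sum fun i _ => Real.log_le_sub_one_of_pos (hpos i)
    _ = (∑ i, hH.eigenvalues i) - n := by
        rw [Finset.sum_sub_distrib]; simp

lemma my_congr_posdef {n : ℕ} {X : Matrix (Fin n) (Fin n) ℝ} (hX : X.PosDef)
    {d : Fin n → ℝ} (hd : ∀ i, 0 < d i) :
    (Matrix.diagonal d * X * Matrix.diagonal d).PosDef := by
  have hsq : (Matrix.diagonal d).PosDef := Matrix.PosDef.diagonal hd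
  have hinj : Function.Injective ((Matrix.diagonal d).mulVec) :=
    Matrix.mulVec_injective_iff_isUnit.mpr hsq.isUnit
  have hherm : (Matrix.diagonal d)ᴴ = Matrix.diagonal d := by simp
  rw [Matrix.posDef_iff_dotProduct_mulVec]
  constructor
  · have := Matrix.isHermitian_conjTranspose_mul_mul (Matrix.diagonal d) hX.isHermitian
    rwa [hherm] at this
  · intro x hx
    have hx' : Matrix.diagonal d *ᵥ x ≠ 0 := fun h => hx (hinj (by simpa using h))
    have := hX.dotProduct_mulVec_pos hx'
    simpa only [star_mulVec, hherm, Matrix.dotProduct_mulVec, Matrix.vecMul_vecMul,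
      Matrix.mulVec_mulVec, ← Matrix.mul_assoc] using this

/-- Diagonal optimality at large penalty: if `|Σ_{ij}| ≤ ρ` for all `i ≠ j`, the
diagonal matrix `X*` with `X*_{ii} = 1/(Σ_{ii} + ρ)` is optimal for the primal
problem, with dual solution `U* = X*⁻¹` diagonal with entries `Σ_{ii} + ρ`. -/
theorem covsel_diagonal_optimal (n : ℕ) (S : Matrix (Fin n) (Fin n) ℝ)
    (hS : S.IsSymm) (ρ : ℝ) (hρ : 0 < ρ)
    (hdiag : ∀ i, 0 < S i i) (hoff : ∀ i j, i ≠ j → |S i j| ≤ ρ)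
    (Xstar Ustar : Matrix (Fin n) (Fin n) ℝ)
    (hX : Xstar = Matrix.diagonal fun i => (S i i + ρ)⁻¹)
    (hUmat : Ustar = Matrix.diagonal fun i => S i i + ρ) :
    Xstar.PosDef ∧ Ustar = Xstar⁻¹ ∧ (∀ i j, |Ustar i j - S i j| ≤ ρ) ∧
      ∀ X : Matrix (Fin n) (Fin n) ℝ, X.IsSymm → X.PosDef →
        Real.log X.det - (S * X).trace - ρ * ∑ i, ∑ j, |X i j| ≤
          Real.log Xstar.det - (S * Xstar).trace - ρ * ∑ i, ∑ j, |Xstar i j| := by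
  have hdpos : ∀ i, 0 < S i i + ρ := fun i => add_pos (hdiag i) hρ
  subst hX; subst hUmat
  have hfeas : ∀ i j, |Matrix.diagonal (fun i => S i i + ρ) i j - S i j| ≤ ρ := by
    intro i j
    by_cases h : i = j
    · subst h; rw [Matrix.diagonal_apply_eq]
      simpa using abs_of_pos hρ |>.le
    · rw [Matrix.diagonal_apply_ne _ h]
      simpa using hoff i j h
  refine ⟨Matrix.PosDef.diagonal fun i => inv_pos.mpr (hdpos i), ?_, hfeas, ?_⟩
  · symm
    apply Matrix.inv_eq_right_inv
    rw [Matrix.diagonal_mul_diagonal, ← Matrix.diagonal_one,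
      show (fun i => (S i i + ρ)⁻¹ * (S i i + ρ)) = fun _ => (1:ℝ) from
        funext fun i => inv_mul_cancel₀ (hdpos i).ne']
  intro X hXsym hXpd
  -- RHS computation
  have hdetXstar : Real.log (Matrix.diagonal fun i => (S i i + ρ)⁻¹).det
      = -∑ i, Real.log (S i i + ρ) := by
    rw [Matrix.det_diagonal, Real.log_prod (fun i _ => inv_ne_zero (hdpos i).ne')]
    simp [Real.log_inv]
  have htrXstar : (S * Matrix.diagonal fun i => (S i i + ρ)⁻¹).trace
      = ∑ i, S i i * (S i i + ρ)⁻¹ := by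
    simp [Matrix.trace, Matrix.diag, Matrix.mul_diagonal]
  have habsXstar : (∑ i, ∑ j, |Matrix.diagonal (fun i => (S i i + ρ)⁻¹) i j|)
      = ∑ i, (S i i + ρ)⁻¹ := by
    refine Finset.sum_congr rfl fun i _ => ?_
    rw [Finset.sum_eq_single i (fun j _ hj => by
      rw [Matrix.diagonal_apply_ne _ (Ne.symm hj), abs_zero]) (by simp)]
    rw [Matrix.diagonal_apply_eq, abs_of_pos (inv_pos.mpr (hdpos i))]
  have hone : (∑ i, S i i * (S i i + ρ)⁻¹) + ρ * ∑ i, (S i i + ρ)⁻¹ = n := by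
    rw [Finset.mul_sum, ← Finset.sum_add_distrib]
    have h1 : ∀ i : Fin n, S i i * (S i i + ρ)⁻¹ + ρ * (S i i + ρ)⁻¹ = 1 := by
      intro i
      field_simp
      exact div_self (hdpos i).ne'
    simp [h1]
  -- congruence matrix
  set Q := Matrix.diagonal (fun i => Real.sqrt (S i i + ρ)) with hQdef
  have hQQ : Q * Q = Matrix.diagonal (fun i => S i i + ρ) := by
    rw [hQdef, Matrix.diagonal_mul_diagonal,
      show (fun i => Real.sqrt (S i i + ρ) * Real.sqrt (S i i + ρ)) = fun i => S i i + ρ from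
        funext fun i => Real.mul_self_sqrt (hdpos i).le]
  have hMpd : (Q * X * Q).PosDef :=
    my_congr_posdef hXpd (fun i => Real.sqrt_pos.mpr (hdpos i))
  have hdetQ : Q.det * Q.det = ∏ i, (S i i + ρ) := by
    rw [hQdef, Matrix.det_diagonal, ← Finset.prod_mul_distrib]
    exact Finset.prod_congr rfl fun i _ => Real.mul_self_sqrt (hdpos i).le
  have hdetM : (Q * X * Q).det = X.det * ∏ i, (S i i + ρ) := by
    rw [Matrix.det_mul, Matrix.det_mul, ← hdetQ]; ring
  have htrM : (Q * X * Q).trace = ∑ i, (S i i + ρ) * X i i := by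
    rw [Matrix.trace_mul_comm, ← Matrix.mul_assoc, hQQ]
    simp [Matrix.trace, Matrix.diag, Matrix.diagonal_mul]
  have hXdet : (0:ℝ) < X.det := hXpd.det_pos
  have hprodpos : (0:ℝ) < ∏ i, (S i i + ρ) := Finset.prod_pos fun i _ => hdpos i
  have hkey : Real.log X.det + ∑ i, Real.log (S i i + ρ)
      ≤ (∑ i, (S i i + ρ) * X i i) - n := by
    have h1 := my_log_det_le hMpd
    rw [hdetM, htrM, Real.log_mul hXdet.ne' hprodpos.ne',
      Real.log_prod (fun i _ => (hdpos i).ne')] at h1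
    exact h1
  -- entrywise bound
  have htrSX : (S * X).trace = ∑ i, ∑ j, S i j * X j i := by
    simp [Matrix.trace, Matrix.diag, Matrix.mul_apply]
  have hentry : (∑ i, (S i i + ρ) * X i i) - (S * X).trace
      ≤ ρ * ∑ i, ∑ j, |X i j| := by
    rw [htrSX]
    have hdiagsum : (∑ i, (S i i + ρ) * X i i)
        = ∑ i, ∑ j, Matrix.diagonal (fun k => S k k + ρ) i j * X j i := by
      refine Finset.sum_congr rfl fun i _ => ?_
      rw [Finset.sum_eq_single i (fun j _ hj => by
        rw [Matrix.diagonal_apply_ne _ (Ne.symm hj), zero_mul]) (by simp)]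
      rw [Matrix.diagonal_apply_eq]
    rw [hdiagsum, ← Finset.sum_sub_distrib]
    have hstep : ∀ i : Fin n, (∑ j, Matrix.diagonal (fun k => S k k + ρ) i j * X j i)
        - ∑ j, S i j * X j i ≤ ∑ j, ρ * |X j i| := by
      intro i
      rw [← Finset.sum_sub_distrib]
      refine Finset.sum_le_sum fun j _ => ?_
      calc Matrix.diagonal (fun k => S k k + ρ) i j * X j i - S i j * X j i
          = (Matrix.diagonal (fun k => S k k + ρ) i j - S i j) * X j i := by ring
        _ ≤ |(Matrix.diagonal (fun k => S k k + ρ) i j - S i j) * X j i| := le_abs_self _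
        _ = |Matrix.diagonal (fun k => S k k + ρ) i j - S i j| * |X j i| := abs_mul _ _
        _ ≤ ρ * |X j i| := mul_le_mul_of_nonneg_right (hfeas i j) (abs_nonneg _)
    calc (∑ i, ((∑ j, Matrix.diagonal (fun k => S k k + ρ) i j * X j i)
          - ∑ j, S i j * X j i)) ≤ ∑ i, ∑ j, ρ * |X j i| :=
            Finset.sum_le_sum fun i _ => hstep i
      _ = ρ * ∑ i, ∑ j, |X i j| := by
          rw [Finset.sum_comm, Finset.mul_sum]
          exact Finset.sum_congr rfl fun i _ => by rw [Finset.mul_sum]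
  rw [hdetXstar, htrXstar, habsXstar]
  linarith
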